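/- Fix an infinite partition p ∈ (ω)^ω and k, ℓ ∈ ω. If O_i, i < ℓ, are open sets in (p)^k with (p)^k = ⋃_{i<ℓ} O_i, then there are open sets Ô_i in (ω)^k with ⋃_{i<ℓ} Ô_i = (ω)^k such that for every q ∈ (ω)^ω and i < ℓ: (q)^k ⊆ Ô_i if and only if (q ∘ p)^k ⊆ O_i. -/
import Mathlib


open Set

/-- `f : ℕ → ℕ` is ordered: a value `i` can occur only after all `j < i` have occurred. -/
def IsOrderedFn (f : ℕ → ℕ) : Prop :=
  ∀ n i, f n = i → ∀ j < i, ∃ m < n, f m = j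

/-- `(ω)^k`: ordered surjections from `ω` onto `k`. -/
def OmegaPart (k : ℕ) : Set (ℕ → ℕ) :=
  {f | IsOrderedFn f ∧ (∀ n, f n < k) ∧ ∀ i < k, ∃ n, f n = i}

/-- `(ω)^ω`: ordered surjections from `ω` onto `ω` (infinite partitions). -/
def OmegaPartInf : Set (ℕ → ℕ) :=
  {f | IsOrderedFn f ∧ Function.Surjective f}

/-- `(p)^k`: the `k`-coarsenings of `p`. -/
def Coarsenings (p : ℕ → ℕ) (k : ℕ) : Set (ℕ → ℕ) :=
  {q | q ∈ OmegaPart k ∧ ∀ n m, p n = p m → q n = q m}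

/-- `(p)^ω`: the infinite coarsenings of `p`. -/
def CoarseningsInf (p : ℕ → ℕ) : Set (ℕ → ℕ) :=
  {q | q ∈ OmegaPartInf ∧ ∀ n m, p n = p m → q n = q m}

/-- `μ^x(i)`: the least `n` with `x n = i`. -/
noncomputable def mu (x : ℕ → ℕ) (i : ℕ) : ℕ := sInf {n | x n = i}

/-- `x ↾ n` as a finite string. -/
def restrictList (x : ℕ → ℕ) (n : ℕ) : List ℕ := (List.range n).map x

/-- The basic (cylinder) set `[σ]` of functions extending the finite string `σ`. -/
def Cyl (σ : List ℕ) : Set (ℕ → ℕ) := {x | ∀ n < σ.length, x n = σ.getD n 0}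

/-- A finite string is ordered. -/
def ListOrdered (σ : List ℕ) : Prop :=
  ∀ n < σ.length, ∀ j < σ.getD n 0, ∃ m < n, σ.getD m 0 = j

/-- `(ω)^k_fin`: ordered finite strings over `k` in which all `i < k` appear. -/
def OmegaPartFin (k : ℕ) : Set (List ℕ) :=
  {σ | ListOrdered σ ∧ (∀ a ∈ σ, a < k) ∧ ∀ i < k, i ∈ σ}

/-- Composition `σ ∘ τ` of finite strings: `(σ ∘ τ)(n) = σ(τ(n))`. -/
def listComp (σ τ : List ℕ) : List ℕ := τ.map fun n => σ.getD n 0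

/-- `σ'` is a `k`-coarsening of the finite string `τ`. -/
def IsListCoarsening (k : ℕ) (σ' τ : List ℕ) : Prop :=
  σ' ∈ OmegaPartFin k ∧ σ'.length = τ.length ∧
    ∀ n < τ.length, ∀ m < τ.length,
      τ.getD n 0 = τ.getD m 0 → σ'.getD n 0 = σ'.getD m 0

/-- The open set coded by a set `W` of finite strings. -/
def OpenFrom (W : Set (List ℕ)) : Set (ℕ → ℕ) := {x | ∃ σ ∈ W, x ∈ Cyl σ}

/-- Codes for partial recursive functionals with an oracle. -/
inductive OracleCode : Type
  | oracle : OracleCode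
  | zero : OracleCode
  | succ : OracleCode
  | left : OracleCode
  | right : OracleCode
  | pair : OracleCode → OracleCode → OracleCode
  | comp : OracleCode → OracleCode → OracleCode
  | prec : OracleCode → OracleCode → OracleCode
  | rfind' : OracleCode → OracleCode

/-- Evaluation of an oracle code with oracle `g`. -/
def OracleCode.evalo (g : ℕ →. ℕ) : OracleCode → ℕ →. ℕ
  | .oracle => g
  | .zero => fun _ => Part.some 0
  | .succ => fun n => Part.some (n + 1)
  | .left => fun n => Part.some (Nat.unpair n).1
  | .right => fun n => Part.some (Nat.unpair n).2
  | .pair cf cg => fun n => Nat.pair <$> OracleCode.evalo g cf n <*> OracleCode.evalo g cg n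
  | .comp cf cg => fun n => OracleCode.evalo g cg n >>= OracleCode.evalo g cf
  | .prec cf cg =>
      Nat.unpaired fun a n =>
        n.rec (OracleCode.evalo g cf a) fun y IH => do
          let i ← IH
          OracleCode.evalo g cg (Nat.pair a (Nat.pair y i))
  | .rfind' cf =>
      Nat.unpaired fun a m =>
        (Nat.rfind fun n =>
            (fun x => decide (x = 0)) <$> OracleCode.evalo g cf (Nat.pair a (n + m))).map (· + m)

/-- View a total function as a partial function. -/
def toP (f : ℕ → ℕ) : ℕ →. ℕ := fun n => Part.some (f n)

/-- `f` is Turing reducible to `g`. -/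
def TuringReducibleFun (f g : ℕ → ℕ) : Prop :=
  ∃ c : OracleCode, c.evalo (toP g) = toP f

open Classical in
/-- Characteristic function of a set of naturals. -/
noncomputable def chi (A : Set ℕ) : ℕ → ℕ := fun n => if n ∈ A then 1 else 0

/-- A numbering of oracle codes. -/
def OracleCode.encodeC : OracleCode → ℕ
  | .oracle => 0
  | .zero => 1
  | .succ => 2
  | .left => 3
  | .right => 4
  | .pair a b => Nat.pair a.encodeC b.encodeC * 4 + 5
  | .comp a b => Nat.pair a.encodeC b.encodeC * 4 + 6
  | .prec a b => Nat.pair a.encodeC b.encodeC * 4 + 7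
  | .rfind' a => a.encodeC * 4 + 8

/-- The Turing jump of (the characteristic function) `g`. -/
def JumpSet (g : ℕ → ℕ) : Set ℕ :=
  {n | ∃ c : OracleCode, ∃ m, n = Nat.pair c.encodeC m ∧ (c.evalo (toP g) m).Dom}

/-- `∅^{(n)}`: the iterated Turing jump of the empty set. -/
noncomputable def EmptyIter : ℕ → Set ℕ
  | 0 => (∅ : Set ℕ)
  | n + 1 => JumpSet (chi (EmptyIter n))

/-- The clopen set coded by the leaf label `e`: `∅`, `univ`, `[τ_m]`, or its complement. -/
def leafSet (e : ℕ) : Set (ℕ → ℕ) :=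
  if e = 0 then ∅
  else if e = 1 then Set.univ
  else if e % 2 = 0 then Cyl (Denumerable.ofNat (List ℕ) (e / 2 - 1))
  else (Cyl (Denumerable.ofNat (List ℕ) (e / 2 - 1)))ᶜ

/-- Evaluation of a normal-form Borel code of height `m` (alternating ∃/∀ over the
labelling function `f` on tuples, `true` for Σ, `false` for Π). -/
def NFEval : ℕ → Bool → (List ℕ → ℕ) → (ℕ → ℕ) → Prop
  | 0, _, f, x => x ∈ leafSet (f [])
  | m + 1, true, f, x => ∃ t, NFEval m false (fun l => f (t :: l)) x
  | m + 1, false, f, x => ∀ t, NFEval m true (fun l => f (t :: l)) x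

lemma mu_mem {p : ℕ → ℕ} (hp : Function.Surjective p) (i : ℕ) : p (mu p i) = i :=
  Nat.sInf_mem (hp i)

lemma mu_le (p : ℕ → ℕ) (n : ℕ) : mu p (p n) ≤ n := Nat.sInf_le rfl

lemma mu_lt {p : ℕ → ℕ} (hp : p ∈ OmegaPartInf) {j i : ℕ} (h : j < i) :
    mu p j < mu p i := by
  obtain ⟨ho, hs⟩ := hp
  obtain ⟨m, hm, hpm⟩ := ho (mu p i) i (mu_mem hs i) j h
  exact lt_of_le_of_lt (Nat.sInf_le hpm) hm

lemma comp_mem_coars {k : ℕ} {p r : ℕ → ℕ} (hp : p ∈ OmegaPartInf) (hr : r ∈ OmegaPart k) :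
    (fun n => r (p n)) ∈ Coarsenings p k := by
  obtain ⟨hpo, hps⟩ := hp
  obtain ⟨hro, hrb, hrs⟩ := hr
  refine ⟨⟨?_, fun n => hrb (p n), fun i hi => ?_⟩, fun n m h => by simp only [h]⟩
  · intro n i hni j hj
    obtain ⟨m', hm', hrm'⟩ := hro (p n) i hni j hj
    obtain ⟨m, hmn, hpm⟩ := hpo n (p n) rfl m' hm'
    exact ⟨m, hmn, by simp only [hpm]; exact hrm'⟩
  · obtain ⟨m, hm⟩ := hrs i hi
    obtain ⟨n, hn⟩ := hps m
    exact ⟨n, by simp only [hn]; exact hm⟩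

lemma decomp {k : ℕ} {p t : ℕ → ℕ} (hp : p ∈ OmegaPartInf) (ht : t ∈ Coarsenings p k) :
    (fun i => t (mu p i)) ∈ OmegaPart k ∧ ∀ n, t (mu p (p n)) = t n := by
  obtain ⟨⟨hto, htb, hts⟩, htc⟩ := ht
  have hps := hp.2
  have heq : ∀ n, t (mu p (p n)) = t n := fun n => htc _ _ (mu_mem hps (p n))
  refine ⟨⟨?_, fun i => htb _, fun i hi => ?_⟩, heq⟩
  · intro i j hij j' hj'
    obtain ⟨m, hm, htm⟩ := hto (mu p i) j hij j' hj'
    refine ⟨p m, ?_, ?_⟩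
    · by_contra h
      push_neg at h
      have h1 : mu p i ≤ mu p (p m) := by
        rcases eq_or_lt_of_le h with h' | h'
        · rw [h']
        · exact le_of_lt (mu_lt hp h')
      have h2 : mu p (p m) < mu p i := lt_of_le_of_lt (mu_le p m) hm
      omega
    · show t (mu p (p m)) = j'
      rw [heq m]; exact htm
  · obtain ⟨n, hn⟩ := hts i hi
    exact ⟨p n, by show t (mu p (p n)) = i; rw [heq n]; exact hn⟩

/-- transferring an open cover of `(p)^k` to an open cover of `(ω)^k`. -/
theorem stmt3 (k ℓ : ℕ) (p : ℕ → ℕ) (hp : p ∈ OmegaPartInf)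
    (O : Fin ℓ → Set (ℕ → ℕ))
    (hopen : ∀ i, ∃ U : Set (ℕ → ℕ), IsOpen U ∧ O i = U ∩ Coarsenings p k)
    (hcover : Coarsenings p k ⊆ ⋃ i, O i) :
    ∃ Oh : Fin ℓ → Set (ℕ → ℕ),
      (∀ i, ∃ U : Set (ℕ → ℕ), IsOpen U ∧ Oh i = U ∩ OmegaPart k) ∧
      OmegaPart k ⊆ ⋃ i, Oh i ∧
      ∀ q ∈ OmegaPartInf, ∀ i,
        (Coarsenings q k ⊆ Oh i ↔ Coarsenings (fun n => q (p n)) k ⊆ O i) := by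
  choose U hUopen hOU using hopen
  set Φ : (ℕ → ℕ) → (ℕ → ℕ) := fun r n => r (p n) with hΦ
  have hΦcont : Continuous Φ := continuous_pi fun n => continuous_apply (p n)
  refine ⟨fun i => Φ ⁻¹' (U i) ∩ OmegaPart k,
    fun i => ⟨Φ ⁻¹' (U i), (hUopen i).preimage hΦcont, rfl⟩, ?_, ?_⟩
  · intro r hr
    have hc := comp_mem_coars hp hr
    have := hcover hc
    rw [mem_iUnion] at this
    obtain ⟨i, hi⟩ := this
    rw [hOU i] at hi
    exact mem_iUnion.mpr ⟨i, hi.1, hr⟩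
  · intro q hq i
    constructor
    · intro hsub t ht
      have htp : t ∈ Coarsenings p k :=
        ⟨ht.1, fun n m h => ht.2 n m (by show q (p n) = q (p m); rw [h])⟩
      obtain ⟨hr, heq⟩ := decomp hp htp
      have hrq : (fun i => t (mu p i)) ∈ Coarsenings q k := by
        refine ⟨hr, fun a b hab => ?_⟩
        exact ht.2 _ _ (by show q (p (mu p a)) = q (p (mu p b)); rw [mu_mem hp.2 a, mu_mem hp.2 b]; exact hab)
      have hmem := hsub hrq
      rw [hOU i]
      refine ⟨?_, htp⟩
      have hΦr : Φ (fun i => t (mu p i)) = t := funext fun n => heq n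
      rw [← hΦr]
      exact hmem.1
    · intro hsub s hs
      have hsO : Φ s ∈ O i := by
        apply hsub
        exact ⟨(comp_mem_coars hp hs.1).1, fun n m h => hs.2 (p n) (p m) h⟩
      rw [hOU i] at hsO
      exact ⟨hsO.1, hs.1⟩
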